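/- arXiv:1912.02306 — 2 statements merged into one kernel-verified Lean document; each statement's English description precedes it below -/
import Mathlib

section
/- Let D be a domain with quotient field K and ∗ a finite character star-operation on D. If every height-one prime of D is a maximal ∗-ideal and conversely (X^{(1)}(D) = ∗-Max(D)), then X^{(1)}(D) = Ass(K/D) = t-Max(D) = w-Max(D). -/
open FractionalIdeal

variable (D : Type*) (K : Type*) [CommRing D] [IsDomain D] [Field K] [Algebra D K]
  [IsFractionRing D K]

/-- A finite character star-operation on the integral domain `D`, acting on the
nonzero fractional ideals of `D` inside its quotient field `K`. -/
structure StarOperation where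
  star : FractionalIdeal (nonZeroDivisors D) K → FractionalIdeal (nonZeroDivisors D) K
  star_principal : ∀ x : K, x ≠ 0 →
    star (spanSingleton (nonZeroDivisors D) x) = spanSingleton (nonZeroDivisors D) x
  star_smul : ∀ (x : K) (A : FractionalIdeal (nonZeroDivisors D) K), x ≠ 0 → A ≠ 0 →
    star (spanSingleton (nonZeroDivisors D) x * A) = spanSingleton (nonZeroDivisors D) x * star A
  le_star : ∀ A, A ≠ 0 → A ≤ star A
  star_mono : ∀ A B, A ≠ 0 → B ≠ 0 → A ≤ B → star A ≤ star B
  star_star : ∀ A, A ≠ 0 → star (star A) = star A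
  finite_character : ∀ A, A ≠ 0 → ∀ x ∈ star A,
    ∃ B : FractionalIdeal (nonZeroDivisors D) K,
      B ≠ 0 ∧ B ≤ A ∧ (B : Submodule D K).FG ∧ x ∈ star B

/-- A prime ideal of height one: a nonzero prime with no nonzero prime strictly below it. -/
def HeightOnePrime (P : Ideal D) : Prop :=
  P.IsPrime ∧ P ≠ ⊥ ∧ ∀ Q : Ideal D, Q.IsPrime → Q < P → Q = ⊥

/-- Membership of `x : K` in the localization `D_P` viewed inside `K`. -/
def MemLocAt (P : Ideal D) (x : K) : Prop :=
  ∃ a t : D, t ∉ P ∧ x * algebraMap D K t = algebraMap D K a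

/-- An almost valuation ring: for nonzero `a, b` some power `a^n` divides `b^n` or
conversely. -/
def AVRing (R : Type*) [CommRing R] : Prop :=
  ∀ a b : R, a ≠ 0 → b ≠ 0 → ∃ n : ℕ, 0 < n ∧ (a ^ n ∣ b ^ n ∨ b ^ n ∣ a ^ n)

/-- The `v`-operation `A ↦ (A⁻¹)⁻¹` on fractional ideals. -/
noncomputable def vOp (A : FractionalIdeal (nonZeroDivisors D) K) : FractionalIdeal (nonZeroDivisors D) K :=
  (A⁻¹)⁻¹

/-- An integral ideal is a `t`-ideal if it contains `B_v` for every nonzero finitely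
generated subideal `B`. -/
def IsTIdeal (I : Ideal D) : Prop :=
  ∀ B : Ideal D, B ≠ ⊥ → B.FG → B ≤ I →
    vOp D K (B : FractionalIdeal (nonZeroDivisors D) K) ≤ (I : FractionalIdeal (nonZeroDivisors D) K)

/-- Maximal `t`-ideals. -/
def IsTMax (P : Ideal D) : Prop :=
  P ≠ ⊥ ∧ P ≠ ⊤ ∧ IsTIdeal D K P ∧
    ∀ J : Ideal D, J ≠ ⊤ → IsTIdeal D K J → P ≤ J → J = P

/-- An integral ideal is a `w`-ideal if it contains every `x ∈ K` with `xJ ⊆ I` for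
some finitely generated ideal `J` with `J⁻¹ = D`. -/
def IsWIdeal (I : Ideal D) : Prop :=
  ∀ x : K, (∃ J : Ideal D, J.FG ∧ ((J : FractionalIdeal (nonZeroDivisors D) K))⁻¹ = 1 ∧
      spanSingleton (nonZeroDivisors D) x * (J : FractionalIdeal (nonZeroDivisors D) K) ≤
        (I : FractionalIdeal (nonZeroDivisors D) K)) →
    x ∈ (I : FractionalIdeal (nonZeroDivisors D) K)

/-- Maximal `w`-ideals. -/
def IsWMax (P : Ideal D) : Prop :=
  P ≠ ⊥ ∧ P ≠ ⊤ ∧ IsWIdeal D K P ∧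
    ∀ J : Ideal D, J ≠ ⊤ → IsWIdeal D K J → P ≤ J → J = P

/-- `P ∈ Ass(K/D)`: `P` is a prime minimal over a conductor ideal `(aD : bD)`. -/
def InAssKD (P : Ideal D) : Prop :=
  P.IsPrime ∧ ∃ a b : D, a ≠ 0 ∧ b ≠ 0 ∧
    (Ideal.span {a}).colon (Ideal.span {b}) ≤ P ∧
    ∀ Q : Ideal D, Q.IsPrime → (Ideal.span {a}).colon (Ideal.span {b}) ≤ Q → Q ≤ P → Q = P

/-- An AGCD (almost GCD) domain: for all nonzero `a, b` there is `n ≥ 1` with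
`(aⁿ, bⁿ)_v` principal. -/
def IsAGCDDomain : Prop :=
  ∀ a b : D, a ≠ 0 → b ≠ 0 → ∃ n : ℕ, 0 < n ∧ ∃ d : D,
    vOp D K ((Ideal.span {a ^ n, b ^ n} : Ideal D) : FractionalIdeal (nonZeroDivisors D) K) =
      spanSingleton (nonZeroDivisors D) (algebraMap D K d)

/-- `D_P` is an almost valuation domain, for `P` a prime of `D`. -/
def AVAtPrime {D : Type*} [CommRing D] (P : Ideal D) (hP : P.IsPrime) : Prop :=
  AVRing (Localization (@Ideal.primeCompl D _ P hP))

namespace StarOperation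

variable {D K}
variable (s : StarOperation D K)

/-- The star closure of an integral ideal, as an integral ideal. -/
def starI (I : Ideal D) : Ideal D :=
  (s.star (I : FractionalIdeal (nonZeroDivisors D) K) : Submodule D K).comap
    (Algebra.linearMap D K)

/-- An integral `∗`-ideal. -/
def IsStarIdeal (I : Ideal D) : Prop :=
  s.star (I : FractionalIdeal (nonZeroDivisors D) K) = (I : FractionalIdeal (nonZeroDivisors D) K)

/-- A maximal `∗`-ideal: maximal among proper integral `∗`-ideals (such ideals are prime). -/
def IsMaxStarIdeal (P : Ideal D) : Prop :=
  P ≠ ⊥ ∧ P ≠ ⊤ ∧ P.IsPrime ∧ s.IsStarIdeal P ∧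
    ∀ J : Ideal D, J ≠ ⊤ → s.IsStarIdeal J → P ≤ J → J = P

/-- `∗`-invertibility of a fractional ideal. -/
def IsStarInvertible (A : FractionalIdeal (nonZeroDivisors D) K) : Prop :=
  s.star (A * A⁻¹) = 1

/-- `∗`-invertibility of an integral ideal. -/
def IsStarInvertibleI (I : Ideal D) : Prop :=
  s.IsStarInvertible (I : FractionalIdeal (nonZeroDivisors D) K)

/-- A `P`-`∗`-homogeneous ideal: nonzero, finitely generated, contained in the maximal
`∗`-ideal `P` and in no other maximal `∗`-ideal. -/
def IsHomogeneous (P I : Ideal D) : Prop :=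
  I ≠ ⊥ ∧ I.FG ∧ s.IsMaxStarIdeal P ∧ I ≤ P ∧
    ∀ Q : Ideal D, s.IsMaxStarIdeal Q → I ≤ Q → Q = P

/-- A type 1 `∗`-homogeneous ideal: `M(A) = √(A_∗)`. -/
def IsType1 (P I : Ideal D) : Prop := P = (s.starI I).radical

/-- A type 2 `∗`-homogeneous ideal: `A_∗ = (M(A)ⁿ)_∗` for some `n ≥ 1`. -/
def IsType2 (P I : Ideal D) : Prop :=
  ∃ n : ℕ, 0 < n ∧
    s.star (I : FractionalIdeal (nonZeroDivisors D) K) =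
      s.star ((P ^ n : Ideal D) : FractionalIdeal (nonZeroDivisors D) K)

/-- A `P`-`∗`-almost super-homogeneous ideal. -/
def IsAlmostSuperHomogeneous (P I : Ideal D) : Prop :=
  s.IsStarInvertibleI I ∧ s.IsHomogeneous P I ∧
    ∀ (k : ℕ) (b : Fin k → D), (∀ i, b i ∈ P) →
      (∃ r : ℕ, 0 < r ∧ ((I ^ r : Ideal D) : FractionalIdeal (nonZeroDivisors D) K) ≤
        s.star ((Ideal.span (Set.range b) : Ideal D) : FractionalIdeal (nonZeroDivisors D) K)) →
      ∃ n : ℕ, 0 < n ∧ s.IsStarInvertibleI (Ideal.span (Set.range fun i => b i ^ n))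

/-- A `∗`-super-homogeneous ideal: every `∗`-homogeneous ideal containing it is
`∗`-invertible. -/
def IsSuperHomogeneous (P I : Ideal D) : Prop :=
  s.IsHomogeneous P I ∧
    ∀ B Q : Ideal D, s.IsHomogeneous Q B → I ≤ B → s.IsStarInvertibleI B

/-- A `P`-`∗`-afg-homogeneous (almost factorial general homogeneous) ideal. -/
def IsAfgHomogeneous (P I : Ideal D) : Prop :=
  s.IsStarInvertibleI I ∧ s.IsHomogeneous P I ∧
    ∀ (k : ℕ) (b : Fin k → D), (∀ i, b i ∈ P) →
      (∃ r : ℕ, 0 < r ∧ ((I ^ r : Ideal D) : FractionalIdeal (nonZeroDivisors D) K) ≤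
        s.star ((Ideal.span (Set.range b) : Ideal D) : FractionalIdeal (nonZeroDivisors D) K)) →
      ∃ n : ℕ, 0 < n ∧ ∃ d : D,
        s.star ((Ideal.span (Set.range fun i => b i ^ n) : Ideal D) :
            FractionalIdeal (nonZeroDivisors D) K) =
          spanSingleton (nonZeroDivisors D) (algebraMap D K d)

/-- A `∗`-af-homogeneous ideal: every `∗`-homogeneous ideal containing it has a power
whose `∗`-closure is principal. -/
def IsAfHomogeneous (P I : Ideal D) : Prop :=
  s.IsHomogeneous P I ∧
    ∀ B Q : Ideal D, s.IsHomogeneous Q B → I ≤ B →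
      ∃ n : ℕ, 0 < n ∧ ∃ d : D,
        s.star ((B ^ n : Ideal D) : FractionalIdeal (nonZeroDivisors D) K) =
          spanSingleton (nonZeroDivisors D) (algebraMap D K d)

/-- `D` is a `∗`-SH domain with respect to a property of ideals: every nonzero proper
principal ideal is a `∗`-product of ideals with the given property. -/
def IsSHWith (prop : Ideal D → Prop) : Prop :=
  ∀ x : D, x ≠ 0 → ¬IsUnit x →
    ∃ (k : ℕ) (A : Fin k → Ideal D), (∀ i, prop (A i)) ∧
      s.star ((∏ i, A i : Ideal D) : FractionalIdeal (nonZeroDivisors D) K) =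
        ((Ideal.span {x} : Ideal D) : FractionalIdeal (nonZeroDivisors D) K)

/-- A `∗`-almost super-SH domain. -/
def IsAlmostSuperSH : Prop :=
  s.IsSHWith fun I => ∃ P, s.IsAlmostSuperHomogeneous P I

/-- Finite character: every nonzero nonunit lies in only finitely many maximal
`∗`-ideals. -/
def FiniteCharacterDom : Prop :=
  ∀ x : D, x ≠ 0 → ¬IsUnit x → {P : Ideal D | s.IsMaxStarIdeal P ∧ x ∈ P}.Finite

/-- Independence: no two distinct maximal `∗`-ideals contain a common nonzero prime. -/
def IndependentDom : Prop :=
  ∀ P Q : Ideal D, s.IsMaxStarIdeal P → s.IsMaxStarIdeal Q → P ≠ Q →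
    ∀ L : Ideal D, L.IsPrime → L ≠ ⊥ → ¬(L ≤ P ∧ L ≤ Q)

/-- A `∗`-h-local domain. -/
def IsHLocal : Prop := s.FiniteCharacterDom ∧ s.IndependentDom

/-- A `∗`-almost independent ring of Krull type. -/
def IsAlmostIRKT : Prop :=
  s.IsHLocal ∧ ∀ (P : Ideal D) (h : s.IsMaxStarIdeal P), AVAtPrime P h.2.2.1

/-- A `∗`-almost generalized Krull domain. -/
def IsAGKD : Prop :=
  (∀ x : K, (∀ P : Ideal D, HeightOnePrime D P → MemLocAt D K P x) →
      ∃ d : D, algebraMap D K d = x) ∧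
  (∀ x : D, x ≠ 0 → ¬IsUnit x → {P : Ideal D | HeightOnePrime D P ∧ x ∈ P}.Finite) ∧
  (∀ P : Ideal D, s.IsMaxStarIdeal P ↔ HeightOnePrime D P) ∧
  (∀ (P : Ideal D) (h : s.IsMaxStarIdeal P), AVAtPrime P h.2.2.1)

/-- A `∗`-Krull domain: `∗`-h-local, `∗-Max(D) = X⁽¹⁾(D)`, and `D_P` is a DVR for each
maximal `∗`-ideal `P`. -/
def IsStarKrull : Prop :=
  s.IsHLocal ∧ (∀ P : Ideal D, s.IsMaxStarIdeal P ↔ HeightOnePrime D P) ∧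
    ∀ (P : Ideal D) (h : s.IsMaxStarIdeal P),
      @IsDiscreteValuationRing (Localization (@Ideal.primeCompl D _ P h.2.2.1)) _
        (IsLocalization.isDomain_localization (@Ideal.primeCompl_le_nonZeroDivisors D _ _ P h.2.2.1))

/-- A `∗`-almost Bézout domain. -/
def IsAlmostBezout : Prop :=
  ∀ a b : D, a ≠ 0 → b ≠ 0 → ∃ n : ℕ, 0 < n ∧ ∃ d : D,
    s.star ((Ideal.span {a ^ n, b ^ n} : Ideal D) : FractionalIdeal (nonZeroDivisors D) K) =
      spanSingleton (nonZeroDivisors D) (algebraMap D K d)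

/-- The `∗`-class group `Cl_∗(D)` is torsion: every `∗`-invertible fractional ideal has a
power whose `∗`-closure is principal. -/
def HasTorsionClassGroup : Prop :=
  ∀ A : FractionalIdeal (nonZeroDivisors D) K, A ≠ 0 → s.IsStarInvertible A →
    ∃ n : ℕ, 0 < n ∧ ∃ x : K, s.star (A ^ n) = spanSingleton (nonZeroDivisors D) x

end StarOperation

variable {D : Type*} {K : Type*} [CommRing D] [IsDomain D] [Field K] [Algebra D K]
  [IsFractionRing D K]

open StarOperation

section VAux

local notation "FI" => FractionalIdeal (nonZeroDivisors D) K

lemma fi_exists_mem_ne_zero {A : FI} (hA : A ≠ 0) : ∃ x ∈ A, x ≠ 0 := by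
  have hb : (A : Submodule D K) ≠ ⊥ := fun hb =>
    hA (FractionalIdeal.coeToSubmodule_eq_bot.mp hb)
  obtain ⟨x, hx, hx0⟩ := Submodule.exists_mem_ne_zero_of_ne_bot hb
  exact ⟨x, hx, hx0⟩

lemma fi_mul_ne_zero {A B : FI} (hA : A ≠ 0) (hB : B ≠ 0) : A * B ≠ 0 := by
  obtain ⟨a, ha, ha0⟩ := fi_exists_mem_ne_zero hA
  obtain ⟨b, hb, hb0⟩ := fi_exists_mem_ne_zero hB
  intro h0
  have : a * b ∈ A * B := FractionalIdeal.mul_mem_mul ha hb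
  rw [h0, FractionalIdeal.mem_zero_iff] at this
  exact mul_ne_zero ha0 hb0 this

lemma fi_inv_ne_zero {A : FI} (hA : A ≠ 0) : A⁻¹ ≠ 0 := by
  have h1 : spanSingleton (nonZeroDivisors D) (algebraMap D K A.den) ≤ A⁻¹ := by
    rw [FractionalIdeal.inv_eq, FractionalIdeal.le_div_iff_mul_le hA,
      FractionalIdeal.den_mul_self_eq_num']
    exact FractionalIdeal.coeIdeal_le_one
  intro h0
  rw [h0, FractionalIdeal.le_zero_iff, FractionalIdeal.spanSingleton_eq_zero_iff] at h1
  exact IsFractionRing.to_map_ne_zero_of_mem_nonZeroDivisors A.den.2 h1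

lemma fi_mul_inv_le_one (A : FI) : A * A⁻¹ ≤ 1 := by
  rw [FractionalIdeal.inv_eq]
  exact FractionalIdeal.mul_one_div_le_one

lemma fi_le_inv_of_mul_le_one {A C : FI} (hC : C ≠ 0) (h : A * C ≤ 1) : A ≤ C⁻¹ := by
  rw [FractionalIdeal.inv_eq]
  exact (FractionalIdeal.le_div_iff_mul_le hC).mpr h

lemma vOp_zero : vOp D K (0 : FI) = 0 := by
  unfold vOp
  rw [FractionalIdeal.inv_zero', FractionalIdeal.inv_zero']

lemma le_vOp (A : FI) : A ≤ vOp D K A := by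
  by_cases hA : A = 0
  · rw [hA, vOp_zero]
  · exact fi_le_inv_of_mul_le_one (fi_inv_ne_zero hA) (fi_mul_inv_le_one A)

lemma vOp_ne_zero {A : FI} (hA : A ≠ 0) : vOp D K A ≠ 0 :=
  fun h0 => hA (FractionalIdeal.le_zero_iff.mp (h0 ▸ le_vOp A))

lemma fi_inv_anti {A B : FI} (hA : A ≠ 0) (h : A ≤ B) : B⁻¹ ≤ A⁻¹ := by
  apply fi_le_inv_of_mul_le_one hA
  calc B⁻¹ * A ≤ B⁻¹ * B := mul_le_mul_right h _
    _ = B * B⁻¹ := mul_comm _ _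
    _ ≤ 1 := fi_mul_inv_le_one B

lemma vOp_mono {A B : FI} (h : A ≤ B) : vOp D K A ≤ vOp D K B := by
  by_cases hA : A = 0
  · rw [hA, vOp_zero]
    exact FractionalIdeal.zero_le _
  · have hB : B ≠ 0 := fun h0 => hA (FractionalIdeal.le_zero_iff.mp (h0 ▸ h))
    exact fi_inv_anti (fi_inv_ne_zero hB) (fi_inv_anti hA h)

lemma fi_inv_inv_inv (A : FI) : ((A⁻¹)⁻¹)⁻¹ = A⁻¹ := by
  by_cases hA : A = 0
  · rw [hA, FractionalIdeal.inv_zero', FractionalIdeal.inv_zero', FractionalIdeal.inv_zero']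
  · exact le_antisymm (fi_inv_anti hA (le_vOp A)) (le_vOp A⁻¹)

lemma vOp_inv (A : FI) : (vOp D K A)⁻¹ = A⁻¹ := fi_inv_inv_inv A

lemma vOp_idem (A : FI) : vOp D K (vOp D K A) = vOp D K A := by
  unfold vOp
  rw [show ((A⁻¹)⁻¹)⁻¹ = A⁻¹ from fi_inv_inv_inv A]

lemma vOp_spanSingleton {x : K} (hx : x ≠ 0) :
    vOp D K (spanSingleton (nonZeroDivisors D) x) = spanSingleton (nonZeroDivisors D) x := by
  unfold vOp
  rw [FractionalIdeal.spanSingleton_inv, FractionalIdeal.spanSingleton_inv, inv_inv]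

lemma vOp_one : vOp D K (1 : FI) = 1 := by
  rw [← FractionalIdeal.spanSingleton_one (S := nonZeroDivisors D) (P := K)]
  exact vOp_spanSingleton one_ne_zero

lemma vOp_le_one {A : FI} (h : A ≤ 1) : vOp D K A ≤ 1 := by
  have := vOp_mono (D := D) (K := K) h
  rwa [vOp_one] at this

lemma fi_inv_spanSingleton_mul {x : K} (hx : x ≠ 0) {B : FI} (hB : B ≠ 0) :
    (spanSingleton (nonZeroDivisors D) x * B)⁻¹ =
      spanSingleton (nonZeroDivisors D) x⁻¹ * B⁻¹ := by
  have hxB : spanSingleton (nonZeroDivisors D) x * B ≠ 0 :=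
    fi_mul_ne_zero (FractionalIdeal.spanSingleton_ne_zero_iff.mpr hx) hB
  refine le_antisymm ?_ ?_
  · have h1 : spanSingleton (nonZeroDivisors D) x *
        (spanSingleton (nonZeroDivisors D) x * B)⁻¹ ≤ B⁻¹ := by
      apply fi_le_inv_of_mul_le_one hB
      calc spanSingleton (nonZeroDivisors D) x * (spanSingleton (nonZeroDivisors D) x * B)⁻¹ * B
          = (spanSingleton (nonZeroDivisors D) x * B) *
            (spanSingleton (nonZeroDivisors D) x * B)⁻¹ := by ring
        _ ≤ 1 := fi_mul_inv_le_one _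
    calc (spanSingleton (nonZeroDivisors D) x * B)⁻¹
        = spanSingleton (nonZeroDivisors D) x⁻¹ *
          (spanSingleton (nonZeroDivisors D) x * (spanSingleton (nonZeroDivisors D) x * B)⁻¹) := by
          rw [← mul_assoc, FractionalIdeal.spanSingleton_mul_spanSingleton,
            inv_mul_cancel₀ hx, FractionalIdeal.spanSingleton_one, one_mul]
      _ ≤ spanSingleton (nonZeroDivisors D) x⁻¹ * B⁻¹ := mul_le_mul_right h1 _
  · apply fi_le_inv_of_mul_le_one hxB
    calc spanSingleton (nonZeroDivisors D) x⁻¹ * B⁻¹ *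
          (spanSingleton (nonZeroDivisors D) x * B)
        = (spanSingleton (nonZeroDivisors D) x⁻¹ * spanSingleton (nonZeroDivisors D) x) *
          (B * B⁻¹) := by ring
      _ = B * B⁻¹ := by
          rw [FractionalIdeal.spanSingleton_mul_spanSingleton, inv_mul_cancel₀ hx,
            FractionalIdeal.spanSingleton_one, one_mul]
      _ ≤ 1 := fi_mul_inv_le_one B

lemma vOp_smul {x : K} (hx : x ≠ 0) (A : FI) :
    vOp D K (spanSingleton (nonZeroDivisors D) x * A) =
      spanSingleton (nonZeroDivisors D) x * vOp D K A := by
  by_cases hA : A = 0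
  · rw [hA, mul_zero, vOp_zero, mul_zero]
  unfold vOp
  rw [fi_inv_spanSingleton_mul hx hA, fi_inv_spanSingleton_mul (inv_ne_zero hx)
    (fi_inv_ne_zero hA), inv_inv]

lemma vOp_mul_le (A B : FI) : vOp D K A * vOp D K B ≤ vOp D K (A * B) := by
  by_cases hA : A = 0
  · rw [hA, vOp_zero, zero_mul, zero_mul, vOp_zero]
  by_cases hB : B = 0
  · rw [hB, vOp_zero, mul_zero, mul_zero, vOp_zero]
  have hAB : A * B ≠ 0 := fi_mul_ne_zero hA hB
  have h1 : (A * B)⁻¹ * A ≤ B⁻¹ := by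
    apply fi_le_inv_of_mul_le_one hB
    calc (A * B)⁻¹ * A * B = (A * B) * (A * B)⁻¹ := by ring
      _ ≤ 1 := fi_mul_inv_le_one _
  have h2 : (A * B)⁻¹ * (B⁻¹)⁻¹ ≤ A⁻¹ := by
    apply fi_le_inv_of_mul_le_one hA
    calc (A * B)⁻¹ * (B⁻¹)⁻¹ * A = ((A * B)⁻¹ * A) * (B⁻¹)⁻¹ := by ring
      _ ≤ B⁻¹ * (B⁻¹)⁻¹ := mul_le_mul_left h1 _
      _ ≤ 1 := fi_mul_inv_le_one _
  have h3 : (A⁻¹)⁻¹ * (B⁻¹)⁻¹ * (A * B)⁻¹ ≤ 1 := by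
    calc (A⁻¹)⁻¹ * (B⁻¹)⁻¹ * (A * B)⁻¹ = ((A * B)⁻¹ * (B⁻¹)⁻¹) * (A⁻¹)⁻¹ := by ring
      _ ≤ A⁻¹ * (A⁻¹)⁻¹ := mul_le_mul_left h2 _
      _ ≤ 1 := fi_mul_inv_le_one _
  exact fi_le_inv_of_mul_le_one (fi_inv_ne_zero hAB) h3

lemma vOp_pow_le (A : FI) (n : ℕ) : (vOp D K A) ^ n ≤ vOp D K (A ^ n) := by
  induction n with
  | zero => simpa [pow_zero] using (vOp_one (D := D) (K := K)).symm.le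
  | succ n ih =>
    calc (vOp D K A) ^ (n + 1) = (vOp D K A) ^ n * vOp D K A := pow_succ _ _
      _ ≤ vOp D K (A ^ n) * vOp D K A := mul_le_mul_left ih _
      _ ≤ vOp D K (A ^ n * A) := vOp_mul_le _ _
      _ = vOp D K (A ^ (n + 1)) := by rw [← pow_succ]

end VAux

section SAux

local notation "FI" => FractionalIdeal (nonZeroDivisors D) K

variable (s : StarOperation D K)

lemma star_one' : s.star 1 = 1 := by
  rw [← FractionalIdeal.spanSingleton_one (S := nonZeroDivisors D) (P := K)]
  exact s.star_principal 1 one_ne_zero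

lemma sstar_ne_zero {A : FI} (hA : A ≠ 0) : s.star A ≠ 0 :=
  fun h0 => hA (FractionalIdeal.le_zero_iff.mp (h0 ▸ s.le_star A hA))

lemma mul_star_le {A B : FI} (hA : A ≠ 0) (hB : B ≠ 0) : A * s.star B ≤ s.star (A * B) := by
  rw [FractionalIdeal.mul_le]
  intro i hi j hj
  by_cases hi0 : i = 0
  · rw [hi0, zero_mul]; exact zero_mem _
  have h1 : spanSingleton (nonZeroDivisors D) i * B ≤ A * B :=
    mul_le_mul_left (FractionalIdeal.spanSingleton_le_iff_mem.mpr hi) B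
  have hne : spanSingleton (nonZeroDivisors D) i * B ≠ 0 :=
    fi_mul_ne_zero (FractionalIdeal.spanSingleton_ne_zero_iff.mpr hi0) hB
  have h2 : i * j ∈ s.star (spanSingleton (nonZeroDivisors D) i * B) := by
    rw [s.star_smul i B hi0 hB]
    exact FractionalIdeal.mul_mem_mul (FractionalIdeal.mem_spanSingleton_self _ i) hj
  exact s.star_mono _ _ hne (fi_mul_ne_zero hA hB) h1 h2

lemma star_mul_star_le {A B : FI} (hA : A ≠ 0) (hB : B ≠ 0) :
    s.star A * s.star B ≤ s.star (A * B) := by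
  have hsA := sstar_ne_zero s hA
  have hAB := fi_mul_ne_zero hA hB
  have h1 : s.star A * s.star B ≤ s.star (s.star A * B) := mul_star_le s hsA hB
  refine h1.trans ?_
  have h2 : s.star A * B ≤ s.star (A * B) := by
    rw [mul_comm (s.star A) B, mul_comm A B]
    exact mul_star_le s hB hA
  have h3 := s.star_mono _ _ (fi_mul_ne_zero hsA hB) (sstar_ne_zero s hAB) h2
  rwa [s.star_star _ hAB] at h3

lemma star_le_one {A : FI} (hA : A ≠ 0) (h1 : A ≤ 1) : s.star A ≤ 1 := by
  have := s.star_mono A 1 hA one_ne_zero h1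
  rwa [star_one' s] at this

lemma star_le_vOp {A : FI} (hA : A ≠ 0) : s.star A ≤ vOp D K A := by
  show s.star A ≤ (A⁻¹)⁻¹
  apply fi_le_inv_of_mul_le_one (fi_inv_ne_zero hA)
  rw [FractionalIdeal.mul_le]
  intro w hw z hz
  by_cases hz0 : z = 0
  · rw [hz0, mul_zero]; exact zero_mem _
  have hzA : spanSingleton (nonZeroDivisors D) z * A ≤ 1 := by
    rw [FractionalIdeal.mul_le]
    intro i hi y hy
    obtain ⟨c, hc⟩ := (FractionalIdeal.mem_spanSingleton _).mp hi
    rw [FractionalIdeal.inv_eq] at hz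
    have := (FractionalIdeal.mem_div_iff_of_ne_zero hA).mp hz y hy
    rw [← hc, smul_mul_assoc]
    exact Submodule.smul_mem _ c this
  have hne : spanSingleton (nonZeroDivisors D) z * A ≠ 0 :=
    fi_mul_ne_zero (FractionalIdeal.spanSingleton_ne_zero_iff.mpr hz0) hA
  have h2 : w * z ∈ s.star (spanSingleton (nonZeroDivisors D) z * A) := by
    rw [s.star_smul z A hz0 hA, mul_comm w z]
    exact FractionalIdeal.mul_mem_mul (FractionalIdeal.mem_spanSingleton_self _ z) hw
  have h3 := s.star_mono _ _ hne one_ne_zero hzA h2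
  rwa [star_one' s] at h3

/-- Every `t`-ideal is a `∗`-ideal. -/
lemma isStarIdeal_of_isTIdeal {I : Ideal D} (hI : I ≠ ⊥) (ht : IsTIdeal D K I) :
    s.IsStarIdeal I := by
  have hne : (I : FI) ≠ 0 := FractionalIdeal.coeIdeal_ne_zero.mpr hI
  refine le_antisymm ?_ (s.le_star _ hne)
  intro x hx
  obtain ⟨B, hB0, hBle, hBfg, hxB⟩ := s.finite_character _ hne x hx
  obtain ⟨B₀, rfl⟩ := FractionalIdeal.le_one_iff_exists_coeIdeal.mp
    (hBle.trans FractionalIdeal.coeIdeal_le_one)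
  have hBfg' : B₀.FG := (FractionalIdeal.coeIdeal_fg (nonZeroDivisors D)
    (FaithfulSMul.algebraMap_injective D K) B₀).mp hBfg
  have h2 := ht B₀ (FractionalIdeal.coeIdeal_ne_zero.mp hB0) hBfg'
    ((FractionalIdeal.coeIdeal_le_coeIdeal K).mp hBle)
  exact h2 (star_le_vOp s hB0 hxB)

/-- Every nonzero proper `∗`-ideal is contained in a maximal `∗`-ideal. -/
lemma exists_isMaxStarIdeal_ge {P : Ideal D} (hP0 : P ≠ ⊥) (hPt : P ≠ ⊤)
    (hPs : s.IsStarIdeal P) : ∃ M : Ideal D, s.IsMaxStarIdeal M ∧ P ≤ M := by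
  set SS : Set (Ideal D) := {J | J ≠ ⊤ ∧ s.IsStarIdeal J ∧ P ≤ J} with hSS
  have hstar_of : ∀ J ∈ SS, J ≠ ⊥ := fun J hJ => fun h0 => hP0 (le_bot_iff.mp (h0 ▸ hJ.2.2))
  have hchains : ∀ c ⊆ SS, IsChain (· ≤ ·) c → ∀ y ∈ c, ∃ ub ∈ SS, ∀ z ∈ c, z ≤ ub := by
    intro c hc hchain y hy
    refine ⟨sSup c, ⟨?_, ?_, (hc hy).2.2.trans (le_sSup hy)⟩, fun z hz => le_sSup hz⟩
    · -- proper
      intro htop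
      have hdir : DirectedOn (· ≤ ·) c := hchain.directedOn
      have h1 : (1 : D) ∈ sSup c := htop ▸ Submodule.mem_top
      obtain ⟨J, hJ, hJ1⟩ := (Submodule.mem_sSup_of_directed ⟨y, hy⟩ hdir).mp h1
      exact (hc hJ).1 ((Ideal.eq_top_iff_one J).mpr hJ1)
    · -- star ideal
      have hne : ((sSup c : Ideal D) : FI) ≠ 0 :=
        FractionalIdeal.coeIdeal_ne_zero.mpr
          (fun h0 => hP0 (le_bot_iff.mp (h0 ▸ (hc hy).2.2.trans (le_sSup hy))))
      refine le_antisymm ?_ (s.le_star _ hne)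
      intro x hx
      obtain ⟨B, hB0, hBle, hBfg, hxB⟩ := s.finite_character _ hne x hx
      obtain ⟨B₀, rfl⟩ := FractionalIdeal.le_one_iff_exists_coeIdeal.mp
        (hBle.trans FractionalIdeal.coeIdeal_le_one)
      have hBfg' : B₀.FG := (FractionalIdeal.coeIdeal_fg (nonZeroDivisors D)
        (FaithfulSMul.algebraMap_injective D K) B₀).mp hBfg
      have hBle' : B₀ ≤ sSup c := (FractionalIdeal.coeIdeal_le_coeIdeal K).mp hBle
      obtain ⟨J, hJc, hBJ⟩ := (CompleteLattice.isCompactElement_iff_le_of_directed_sSup_le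
          (Ideal D) B₀).mp ((Submodule.fg_iff_compact B₀).mp hBfg') c ⟨y, hy⟩
          hchain.directedOn hBle'
      have h2 := s.star_mono _ _ hB0 (FractionalIdeal.coeIdeal_ne_zero.mpr
        (fun h0 => (hc hJc).1 ?_)) ((FractionalIdeal.coeIdeal_le_coeIdeal K).mpr hBJ)
      · have h3 : s.star ((J : Ideal D) : FI) = (J : FI) := (hc hJc).2.1
        have h4 : x ∈ (J : FI) := h3 ▸ h2 hxB
        exact FractionalIdeal.coeIdeal_le_coeIdeal K |>.mpr (le_sSup hJc) h4
      · exact absurd (h0 ▸ hBJ) (fun hh => (FractionalIdeal.coeIdeal_ne_zero.mp hB0)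
          (le_bot_iff.mp hh))
  obtain ⟨M, hPM, hMmem, hMmax⟩ := zorn_le_nonempty₀ SS hchains P ⟨hPt, hPs, le_rfl⟩
  have hM0 : M ≠ ⊥ := hstar_of M hMmem
  have hMt : M ≠ ⊤ := hMmem.1
  have hMs : s.IsStarIdeal M := hMmem.2.1
  have hmax : ∀ J : Ideal D, J ≠ ⊤ → s.IsStarIdeal J → M ≤ J → J = M := by
    intro J hJt hJs hMJ
    exact le_antisymm (hMmax ⟨hJt, hJs, hPM.trans hMJ⟩ hMJ) hMJ
  -- primality
  have hprime : M.IsPrime := by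
    constructor
    · exact hMt
    · intro a b hab
      by_contra hcon
      push_neg at hcon
      obtain ⟨ha, hb⟩ := hcon
      have key : ∀ c : D, c ∉ M →
          s.star ((M ⊔ Ideal.span {c} : Ideal D) : FI) = 1 := by
        intro c hc
        have hne : ((M ⊔ Ideal.span {c} : Ideal D) : FI) ≠ 0 :=
          FractionalIdeal.coeIdeal_ne_zero.mpr
            (fun h0 => hM0 (le_bot_iff.mp (h0 ▸ le_sup_left)))
        have hle1 : s.star ((M ⊔ Ideal.span {c} : Ideal D) : FI) ≤ 1 :=
          star_le_one s hne FractionalIdeal.coeIdeal_le_one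
        obtain ⟨N, hN⟩ := FractionalIdeal.le_one_iff_exists_coeIdeal.mp hle1
        have hNs : s.IsStarIdeal N := by
          unfold StarOperation.IsStarIdeal
          rw [hN]
          exact s.star_star _ hne
        have hMN : M ≤ N := by
          have : (M : FI) ≤ (N : FI) := by
            rw [hN]
            exact (FractionalIdeal.coeIdeal_le_coeIdeal K).mpr le_sup_left |>.trans
              (s.le_star _ hne)
          exact (FractionalIdeal.coeIdeal_le_coeIdeal K).mp this
        have hcN : c ∈ N := by
          have h1 : (algebraMap D K c) ∈ (N : FI) := by
            rw [hN]
            apply s.le_star _ hne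
            exact FractionalIdeal.mem_coeIdeal_of_mem _
              (le_sup_right (a := M) (Ideal.subset_span rfl))
          obtain ⟨y, hy, hy2⟩ := (FractionalIdeal.mem_coeIdeal _).mp h1
          rwa [(FaithfulSMul.algebraMap_injective D K) hy2] at hy
        by_cases hNt : N = ⊤
        · rw [← hN, hNt]
          simp
        · exact absurd (hmax N hNt hNs hMN ▸ hcN) hc
      have h1 : (1 : K) ∈ s.star ((M ⊔ Ideal.span {a} : Ideal D) : FI) *
          s.star ((M ⊔ Ideal.span {b} : Ideal D) : FI) := by
        rw [key a ha, key b hb, mul_one]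
        rw [← FractionalIdeal.spanSingleton_one (S := nonZeroDivisors D) (P := K)]
        exact FractionalIdeal.mem_spanSingleton_self _ 1
      have hnea : ((M ⊔ Ideal.span {a} : Ideal D) : FI) ≠ 0 :=
        FractionalIdeal.coeIdeal_ne_zero.mpr
          (fun h0 => hM0 (le_bot_iff.mp (h0 ▸ le_sup_left)))
      have hneb : ((M ⊔ Ideal.span {b} : Ideal D) : FI) ≠ 0 :=
        FractionalIdeal.coeIdeal_ne_zero.mpr
          (fun h0 => hM0 (le_bot_iff.mp (h0 ▸ le_sup_left)))
      have h2 := star_mul_star_le s hnea hneb h1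
      have h3 : ((M ⊔ Ideal.span {a} : Ideal D) : FI) * ((M ⊔ Ideal.span {b} : Ideal D) : FI)
          ≤ (M : FI) := by
        rw [← FractionalIdeal.coeIdeal_mul]
        apply (FractionalIdeal.coeIdeal_le_coeIdeal K).mpr
        rw [Ideal.sup_mul, Ideal.mul_sup, Ideal.mul_sup, Ideal.span_singleton_mul_span_singleton]
        refine sup_le (sup_le Ideal.mul_le_left Ideal.mul_le_left)
          (sup_le Ideal.mul_le_right (Ideal.span_le.mpr ?_))
        rintro x rfl
        exact hab
      have h4 := s.star_mono _ _ (fi_mul_ne_zero hnea hneb)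
        (FractionalIdeal.coeIdeal_ne_zero.mpr hM0) h3
      have h5 : (1 : K) ∈ (M : FI) := by
        have := h4 h2
        rwa [show s.star (M : FI) = (M : FI) from hMs] at this
      obtain ⟨y, hy, hy2⟩ := (FractionalIdeal.mem_coeIdeal _).mp h5
      rw [show (1 : K) = algebraMap D K 1 from (RingHom.map_one _).symm] at hy2
      rw [(FaithfulSMul.algebraMap_injective D K) hy2] at hy
      exact hMt ((Ideal.eq_top_iff_one M).mpr hy)
  exact ⟨M, ⟨hM0, hMt, hprime, hMs, hmax⟩, hPM⟩

end SAux

section TAux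

local notation "FI" => FractionalIdeal (nonZeroDivisors D) K

lemma fi_pow_mem {A : FractionalIdeal (nonZeroDivisors D) K} {x : K} (hx : x ∈ A) (n : ℕ) :
    x ^ n ∈ A ^ n := by
  induction n with
  | zero => simpa using FractionalIdeal.one_mem_one _
  | succ n ih =>
    rw [pow_succ, pow_succ]
    exact FractionalIdeal.mul_mem_mul ih hx

/-- If `P` is prime and minimal over `J₀` (in the strong sense), then any finitely
generated ideal inside `P` has a power multiplied into `J₀` by an element outside `P`. -/
lemma pow_mul_le_of_strong_min {J₀ P B : Ideal D} (hP : P.IsPrime) (hJP : J₀ ≤ P)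
    (hmin : ∀ Q : Ideal D, Q.IsPrime → J₀ ≤ Q → Q ≤ P → Q = P)
    (hB : B.FG) (hBP : B ≤ P) :
    ∃ (n : ℕ) (t : D), 0 < n ∧ t ∉ P ∧ B ^ n ≤ J₀.colon (Ideal.span {t}) := by
  classical
  haveI := hP
  set A := Localization.AtPrime P with hA
  let f := algebraMap D A
  have hrad : Ideal.map f B ≤ (Ideal.map f J₀).radical := by
    rw [Ideal.radical_eq_sInf]
    refine le_sInf ?_
    rintro Q' ⟨hle, hQ'⟩
    have hQ'p : (Q'.comap f).IsPrime := hQ'.comap f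
    have hJiQ : J₀ ≤ Q'.comap f := Ideal.le_comap_map.trans (Ideal.comap_mono hle)
    have hcom : Q'.comap f ≤ P := by
      intro x hx
      by_contra hxP
      have hu : IsUnit (f x) := IsLocalization.map_units A (⟨x, hxP⟩ : P.primeCompl)
      exact hQ'.ne_top (Q'.eq_top_of_isUnit_mem hx hu)
    have hQP := hmin _ hQ'p hJiQ hcom
    exact Ideal.map_le_iff_le_comap.mpr (le_of_le_of_eq hBP hQP.symm)
  obtain ⟨m, hm⟩ := Ideal.exists_pow_le_of_le_radical_of_fg hrad (hB.map f)
  refine ⟨m + 1, ?_⟩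
  have hn : Ideal.map f (B ^ (m + 1)) ≤ Ideal.map f J₀ := by
    rw [Ideal.map_pow]
    exact (Ideal.pow_le_pow_right (Nat.le_succ m)).trans hm
  obtain ⟨T, hT⟩ := Submodule.FG.pow hB (m + 1)
  have hg : ∀ g ∈ T, ∃ t : D, t ∉ P ∧ t * g ∈ J₀ := by
    intro g hgT
    have h1 : f g ∈ Ideal.map f (B ^ (m + 1)) :=
      Ideal.mem_map_of_mem f (hT ▸ Ideal.subset_span hgT)
    have h2 := hn h1
    rw [IsLocalization.mem_map_algebraMap_iff P.primeCompl A] at h2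
    obtain ⟨⟨⟨j, hj⟩, t⟩, heq⟩ := h2
    rw [← _root_.map_mul] at heq
    obtain ⟨c, hc⟩ := (IsLocalization.eq_iff_exists P.primeCompl A).mp heq
    refine ⟨(c : D) * (t : D), fun hmem => ?_, ?_⟩
    · rcases hP.mem_or_mem hmem with h | h
      · exact c.2 h
      · exact t.2 h
    · have heq2 : (c : D) * (t : D) * g = (c : D) * j := by
        rw [← hc]; ring
      show (c : D) * (t : D) * g ∈ J₀
      rw [heq2]
      exact Ideal.mul_mem_left _ _ hj
  choose tf htf1 htf2 using hg
  set t := ∏ g ∈ T.attach, tf g.1 g.2 with ht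
  have htP : t ∉ P := by
    intro hmem
    have : t ∈ P.primeCompl := Submonoid.prod_mem _ (fun g _ => htf1 g.1 g.2)
    exact this hmem
  refine ⟨t, Nat.succ_pos m, htP, ?_⟩
  rw [← hT, Submodule.span_le]
  intro g hgT
  rw [SetLike.mem_coe, Ideal.mem_colon_span_singleton]
  have hsplit : tf g hgT * ∏ x ∈ T.attach.erase ⟨g, hgT⟩, tf x.1 x.2 = t :=
    Finset.mul_prod_erase T.attach (fun x => tf x.1 x.2) (Finset.mem_attach T ⟨g, hgT⟩)
  have heq3 : g * t = (∏ x ∈ T.attach.erase ⟨g, hgT⟩, tf x.1 x.2) * (tf g hgT * g) := by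
    rw [← hsplit]; ring
  rw [heq3]
  exact Ideal.mul_mem_left _ _ (htf2 g hgT)

/-- `P` prime and minimal (strongly) over a nonzero divisorial ideal is a `t`-ideal. -/
lemma isTIdeal_of_strong_min_divisorial {J₀ P : Ideal D} (hP : P.IsPrime)
    (hJ0 : J₀ ≠ ⊥) (hJP : J₀ ≤ P)
    (hmin : ∀ Q : Ideal D, Q.IsPrime → J₀ ≤ Q → Q ≤ P → Q = P)
    (hdiv : vOp D K (J₀ : FI) ≤ (J₀ : FI)) : IsTIdeal D K P := by
  intro B hB0 hBfg hBP
  obtain ⟨n, t, hn, htP, hcol⟩ := pow_mul_le_of_strong_min hP hJP hmin hBfg hBP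
  intro x hx
  have hx1 : x ∈ (1 : FI) := vOp_le_one FractionalIdeal.coeIdeal_le_one hx
  obtain ⟨y, hy⟩ := (FractionalIdeal.mem_one_iff _).mp hx1
  have ht0 : t ≠ 0 := fun h0 => htP (h0 ▸ P.zero_mem)
  have halgt : algebraMap D K t ≠ 0 :=
    fun h0 => ht0 ((_root_.map_eq_zero_iff _ (FaithfulSMul.algebraMap_injective D K)).mp h0)
  have hxn : x ^ n ∈ vOp D K ((B : FI) ^ n) := vOp_pow_le (B : FI) n (fi_pow_mem hx n)
  have h3 : algebraMap D K t * x ^ n ∈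
      spanSingleton (nonZeroDivisors D) (algebraMap D K t) * vOp D K ((B : FI) ^ n) :=
    FractionalIdeal.mul_mem_mul (FractionalIdeal.mem_spanSingleton_self _ _) hxn
  rw [← vOp_smul halgt] at h3
  have h4 : spanSingleton (nonZeroDivisors D) (algebraMap D K t) * ((B : FI) ^ n) =
      ((Ideal.span {t} * B ^ n : Ideal D) : FI) := by
    rw [FractionalIdeal.coeIdeal_mul, FractionalIdeal.coeIdeal_span_singleton,
      FractionalIdeal.coeIdeal_pow]
  have h5 : Ideal.span {t} * B ^ n ≤ J₀ := by
    rw [Ideal.mul_le]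
    intro r hr u hu
    obtain ⟨c, hc⟩ := Ideal.mem_span_singleton'.mp hr
    have : u * t ∈ J₀ := Ideal.mem_colon_span_singleton.mp (hcol hu)
    have heq4 : r * u = c * (u * t) := by rw [← hc]; ring
    rw [heq4]
    exact Ideal.mul_mem_left _ _ this
  have h6 : vOp D K (spanSingleton (nonZeroDivisors D) (algebraMap D K t) * ((B : FI) ^ n))
      ≤ (J₀ : FI) := by
    rw [h4]
    exact (vOp_mono ((FractionalIdeal.coeIdeal_le_coeIdeal K).mpr h5)).trans hdiv
  have h7 : algebraMap D K t * x ^ n ∈ (P : FI) :=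
    ((FractionalIdeal.coeIdeal_le_coeIdeal K).mpr hJP) (h6 h3)
  obtain ⟨z, hz, hz2⟩ := (FractionalIdeal.mem_coeIdeal _).mp h7
  have hz3 : z = t * y ^ n := by
    apply FaithfulSMul.algebraMap_injective D K
    rw [hz2, _root_.map_mul, _root_.map_pow, hy]
  rw [hz3] at hz
  have hyP : y ∈ P := hP.mem_of_pow_mem n (hP.mem_or_mem hz |>.resolve_left htP)
  rw [← hy]
  exact FractionalIdeal.mem_coeIdeal_of_mem _ hyP

/-- Every height-one prime is a `t`-ideal. -/
lemma isTIdeal_of_heightOne {P : Ideal D} (hP : HeightOnePrime D P) : IsTIdeal D K P := by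
  obtain ⟨hprime, hne, hmin⟩ := hP
  obtain ⟨a, haP, ha0⟩ := Submodule.exists_mem_ne_zero_of_ne_bot hne
  have halg : algebraMap D K a ≠ 0 :=
    fun h0 => ha0 ((_root_.map_eq_zero_iff _ (FaithfulSMul.algebraMap_injective D K)).mp h0)
  apply isTIdeal_of_strong_min_divisorial hprime
    (fun h0 => ha0 (Ideal.span_singleton_eq_bot.mp h0))
    (Ideal.span_le.mpr (Set.singleton_subset_iff.mpr haP))
  · intro Q hQ hJQ hQP
    rcases eq_or_lt_of_le hQP with h | h
    · exact h
    · exact absurd (hmin Q hQ h) (fun hb => ha0 (by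
        have := hJQ (Ideal.subset_span rfl)
        rw [hb] at this
        exact (Submodule.mem_bot D).mp this))
  · rw [FractionalIdeal.coeIdeal_span_singleton, vOp_spanSingleton halg]

end TAux

section WAux

local notation "FI" => FractionalIdeal (nonZeroDivisors D) K

lemma fi_one_inv : ((1 : FI))⁻¹ = 1 := by
  rw [FractionalIdeal.inv_eq, FractionalIdeal.div_one]

/-- Every `t`-ideal is a `w`-ideal. -/
lemma isWIdeal_of_isTIdeal {I : Ideal D} (ht : IsTIdeal D K I) : IsWIdeal D K I := by
  rintro x ⟨Jw, hfg, hinv, hle⟩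
  by_cases hx0 : x = 0
  · rw [hx0]
    exact zero_mem _
  have hJw0 : (Jw : FI) ≠ 0 := by
    intro h0
    rw [h0, FractionalIdeal.inv_zero'] at hinv
    exact one_ne_zero hinv.symm
  have hsx : spanSingleton (nonZeroDivisors D) x ≠ 0 :=
    FractionalIdeal.spanSingleton_ne_zero_iff.mpr hx0
  have hv : vOp D K (Jw : FI) = 1 := by
    unfold vOp
    rw [hinv, fi_one_inv]
  have h1 : spanSingleton (nonZeroDivisors D) x =
      vOp D K (spanSingleton (nonZeroDivisors D) x * (Jw : FI)) := by
    rw [vOp_smul hx0, hv, mul_one]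
  obtain ⟨B₀, hB₀⟩ := FractionalIdeal.le_one_iff_exists_coeIdeal.mp
    (hle.trans FractionalIdeal.coeIdeal_le_one)
  have hB₀0 : B₀ ≠ ⊥ := by
    intro h0
    apply fi_mul_ne_zero hsx hJw0
    rw [← hB₀, h0, FractionalIdeal.coeIdeal_bot]
  have hB₀fg : B₀.FG := by
    apply (FractionalIdeal.coeIdeal_fg (nonZeroDivisors D)
      (FaithfulSMul.algebraMap_injective D K) B₀).mp
    rw [hB₀, FractionalIdeal.coe_mul, FractionalIdeal.coe_spanSingleton]
    exact Submodule.FG.mul (Submodule.fg_span_singleton x)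
      ((FractionalIdeal.coeIdeal_fg (nonZeroDivisors D)
        (FaithfulSMul.algebraMap_injective D K) Jw).mpr hfg)
  have hB₀I : B₀ ≤ I := (FractionalIdeal.coeIdeal_le_coeIdeal K).mp (hB₀ ▸ hle)
  have h2 := ht B₀ hB₀0 hB₀fg hB₀I
  rw [hB₀, ← h1] at h2
  exact h2 (FractionalIdeal.mem_spanSingleton_self _ x)

lemma finset_sup_fg {ι : Type*} (F : Finset ι) (f : ι → Ideal D)
    (hf : ∀ i ∈ F, (f i).FG) : (F.sup f).FG := by
  classical
  induction F using Finset.induction_on with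
  | empty => exact Submodule.fg_bot
  | @insert a F' hni ih =>
    rw [Finset.sup_insert]
    exact Submodule.FG.sup (hf a (Finset.mem_insert_self a F'))
      (ih fun i hi => hf i (Finset.mem_insert_of_mem hi))

/-- The "t-closure" construction: above every nonzero proper `w`-ideal there is a
proper `t`-ideal. -/
lemma exists_tIdeal_between {J : Ideal D} (hJ0 : J ≠ ⊥) (hJt : J ≠ ⊤)
    (hJw : IsWIdeal D K J) :
    ∃ T : Ideal D, J ≤ T ∧ T ≠ ⊤ ∧ IsTIdeal D K T := by
  classical
  obtain ⟨p, hpJ, hp0⟩ := Submodule.exists_mem_ne_zero_of_ne_bot hJ0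
  have hspanp : (Ideal.span {p} : Ideal D) ≠ ⊥ :=
    fun h0 => hp0 (Ideal.span_singleton_eq_bot.mp h0)
  set T : Ideal D :=
    { carrier := {d : D | ∃ B : Ideal D, B ≠ ⊥ ∧ B.FG ∧ B ≤ J ∧
        algebraMap D K d ∈ vOp D K (B : FI)}
      add_mem' := by
        rintro x y ⟨B₁, h1b, h1f, h1j, h1m⟩ ⟨B₂, h2b, h2f, h2j, h2m⟩
        refine ⟨B₁ ⊔ B₂, fun h0 => h1b (le_bot_iff.mp (h0 ▸ le_sup_left)),
          Submodule.FG.sup h1f h2f, sup_le h1j h2j, ?_⟩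
        rw [_root_.map_add]
        have ha := vOp_mono ((FractionalIdeal.coeIdeal_le_coeIdeal K).mpr
          (le_sup_left : B₁ ≤ B₁ ⊔ B₂)) h1m
        have hb := vOp_mono ((FractionalIdeal.coeIdeal_le_coeIdeal K).mpr
          (le_sup_right : B₂ ≤ B₁ ⊔ B₂)) h2m
        exact Submodule.add_mem (vOp D K ((B₁ ⊔ B₂ : Ideal D) : FI) : Submodule D K) ha hb
      zero_mem' := by
        refine ⟨Ideal.span {p}, hspanp, Submodule.fg_span_singleton p,
          Ideal.span_le.mpr (Set.singleton_subset_iff.mpr hpJ), ?_⟩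
        rw [_root_.map_zero]
        exact zero_mem _
      smul_mem' := by
        rintro c d ⟨B, hb, hf, hj, hm⟩
        refine ⟨B, hb, hf, hj, ?_⟩
        rw [smul_eq_mul, _root_.map_mul, ← Algebra.smul_def]
        exact Submodule.smul_mem (vOp D K (B : FI) : Submodule D K) c hm } with hT
  have hmemT : ∀ d : D, d ∈ T ↔ ∃ B : Ideal D, B ≠ ⊥ ∧ B.FG ∧ B ≤ J ∧
      algebraMap D K d ∈ vOp D K (B : FI) := fun d => Iff.rfl
  refine ⟨T, ?_, ?_, ?_⟩
  · -- J ≤ T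
    intro d hd
    by_cases hd0 : d = 0
    · rw [hd0]; exact zero_mem T
    have halg : algebraMap D K d ≠ 0 :=
      fun h0 => hd0 ((_root_.map_eq_zero_iff _ (FaithfulSMul.algebraMap_injective D K)).mp h0)
    refine (hmemT d).mpr ⟨Ideal.span {d}, fun h0 => hd0 (Ideal.span_singleton_eq_bot.mp h0),
      Submodule.fg_span_singleton d, Ideal.span_le.mpr (Set.singleton_subset_iff.mpr hd), ?_⟩
    rw [FractionalIdeal.coeIdeal_span_singleton, vOp_spanSingleton halg]
    exact FractionalIdeal.mem_spanSingleton_self _ _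
  · -- T proper
    intro htop
    have h1T : (1 : D) ∈ T := htop ▸ Submodule.mem_top
    obtain ⟨B, hb, hf, hj, hm⟩ := (hmemT 1).mp h1T
    rw [_root_.map_one] at hm
    have hBne : (B : FI) ≠ 0 := FractionalIdeal.coeIdeal_ne_zero.mpr hb
    have hvB : vOp D K (B : FI) = 1 := by
      refine le_antisymm (vOp_le_one FractionalIdeal.coeIdeal_le_one) ?_
      rw [← FractionalIdeal.spanSingleton_one (S := nonZeroDivisors D) (P := K)]
      exact FractionalIdeal.spanSingleton_le_iff_mem.mpr hm
    have hBinv : ((B : FI))⁻¹ = 1 := by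
      rw [← vOp_inv, hvB, fi_one_inv]
    have h1J : (1 : K) ∈ (J : FI) := by
      apply hJw 1
      refine ⟨B, hf, hBinv, ?_⟩
      rw [FractionalIdeal.spanSingleton_one, one_mul]
      exact (FractionalIdeal.coeIdeal_le_coeIdeal K).mpr hj
    obtain ⟨y, hy, hy2⟩ := (FractionalIdeal.mem_coeIdeal _).mp h1J
    rw [show (1 : K) = algebraMap D K 1 from (RingHom.map_one _).symm] at hy2
    rw [(FaithfulSMul.algebraMap_injective D K) hy2] at hy
    exact hJt ((Ideal.eq_top_iff_one J).mpr hy)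
  · -- T is a t-ideal
    intro B' hB'0 hB'fg hB'T
    obtain ⟨S', hS'⟩ := hB'fg
    have hgT : ∀ g : D, g ∈ S' → g ∈ T := by
      intro g hg
      exact hB'T (hS' ▸ Ideal.subset_span hg)
    choose Bf hBfb hBff hBfj hBfm using fun (g : {x // x ∈ S'}) => (hmemT g.1).mp
      (hgT g.1 g.2)
    set C : Ideal D := (S'.attach.sup Bf) ⊔ Ideal.span {p} with hC
    have hC0 : C ≠ ⊥ := fun h0 => hspanp (le_bot_iff.mp (h0 ▸ le_sup_right))
    have hCfg : C.FG := Submodule.FG.sup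
      (finset_sup_fg S'.attach Bf (fun i _ => hBff i)) (Submodule.fg_span_singleton p)
    have hCJ : C ≤ J := sup_le (Finset.sup_le fun i _ => hBfj i)
      (Ideal.span_le.mpr (Set.singleton_subset_iff.mpr hpJ))
    have hB'C : (B' : FI) ≤ vOp D K (C : FI) := by
      intro x hx
      obtain ⟨d, hd, rfl⟩ := (FractionalIdeal.mem_coeIdeal _).mp hx
      have hdspan : d ∈ Ideal.span (S' : Set D) := hS'.symm ▸ hd
      have : d ∈ Submodule.comap (Algebra.linearMap D K)
          (vOp D K (C : FI) : Submodule D K) := by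
        refine Ideal.span_le.mpr ?_ hdspan
        intro g hg
        rw [SetLike.mem_coe, Submodule.mem_comap]
        have hle : (Bf ⟨g, hg⟩ : FI) ≤ (C : FI) :=
          (FractionalIdeal.coeIdeal_le_coeIdeal K).mpr
            ((Finset.le_sup (Finset.mem_attach S' ⟨g, hg⟩)).trans le_sup_left)
        exact vOp_mono hle (hBfm ⟨g, hg⟩)
      rwa [Submodule.mem_comap] at this
    intro x hx
    have hx1 : x ∈ (1 : FI) := vOp_le_one FractionalIdeal.coeIdeal_le_one hx
    obtain ⟨d, rfl⟩ := (FractionalIdeal.mem_one_iff _).mp hx1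
    have hxC : algebraMap D K d ∈ vOp D K (C : FI) := by
      have h2 := vOp_mono hB'C hx
      rwa [vOp_idem] at h2
    exact FractionalIdeal.mem_coeIdeal_of_mem _ ((hmemT d).mpr ⟨C, hC0, hCfg, hCJ, hxC⟩)

/-- Membership in `Ass(K/D)` makes `P` a `t`-ideal. -/
lemma inAss_isTIdeal {P : Ideal D} (hP : InAssKD D P) :
    IsTIdeal D K P ∧ P ≠ ⊥ := by
  obtain ⟨hprime, a, b, ha0, hb0, hle, hmin⟩ := hP
  set J₀ := (Ideal.span {a}).colon (Ideal.span {b}) with hJ₀def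
  have haJ : a ∈ J₀ := Ideal.mem_colon_span_singleton.mpr
    (Ideal.mul_mem_right b _ (Ideal.subset_span rfl))
  have hJ0 : J₀ ≠ ⊥ := fun h0 => ha0 ((Submodule.mem_bot D).mp (h0 ▸ haJ))
  have halga : algebraMap D K a ≠ 0 :=
    fun h0 => ha0 ((_root_.map_eq_zero_iff _ (FaithfulSMul.algebraMap_injective D K)).mp h0)
  have halgb : algebraMap D K b ≠ 0 :=
    fun h0 => hb0 ((_root_.map_eq_zero_iff _ (FaithfulSMul.algebraMap_injective D K)).mp h0)
  set c : K := algebraMap D K a / algebraMap D K b with hc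
  have hc0 : c ≠ 0 := div_ne_zero halga halgb
  have step1 : (J₀ : FI) ≤ spanSingleton (nonZeroDivisors D) c := by
    intro x hx
    obtain ⟨d, hd, rfl⟩ := (FractionalIdeal.mem_coeIdeal _).mp hx
    obtain ⟨e, he⟩ := Ideal.mem_span_singleton'.mp (Ideal.mem_colon_span_singleton.mp hd)
    refine (FractionalIdeal.mem_spanSingleton _).mpr ⟨e, ?_⟩
    rw [Algebra.smul_def, hc, mul_div_assoc', div_eq_iff halgb, ← _root_.map_mul,
      ← _root_.map_mul, he]
  have hdiv : vOp D K (J₀ : FI) ≤ (J₀ : FI) := by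
    intro x hx
    have hxc : x ∈ spanSingleton (nonZeroDivisors D) c := by
      have := vOp_mono step1 hx
      rwa [vOp_spanSingleton hc0] at this
    have hx1 : x ∈ (1 : FI) := vOp_le_one FractionalIdeal.coeIdeal_le_one hx
    obtain ⟨d, rfl⟩ := (FractionalIdeal.mem_one_iff _).mp hx1
    obtain ⟨e, he⟩ := (FractionalIdeal.mem_spanSingleton _).mp hxc
    rw [Algebra.smul_def, hc, mul_div_assoc', div_eq_iff halgb, ← _root_.map_mul,
      ← _root_.map_mul] at he
    have hdb : e * a = d * b := FaithfulSMul.algebraMap_injective D K he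
    refine FractionalIdeal.mem_coeIdeal_of_mem _ ?_
    exact Ideal.mem_colon_span_singleton.mpr (Ideal.mem_span_singleton'.mpr ⟨e, hdb⟩)
  refine ⟨isTIdeal_of_strong_min_divisorial hprime hJ0 hle
    (fun Q hQ h1 h2 => hmin Q hQ h1 h2) hdiv, ?_⟩
  exact fun h0 => ha0 ((Submodule.mem_bot D).mp (h0 ▸ hle haJ))

end WAux

theorem stmt10 (s : StarOperation D K)
    (h : ∀ P : Ideal D, HeightOnePrime D P ↔ s.IsMaxStarIdeal P) :
    ∀ P : Ideal D, (HeightOnePrime D P ↔ InAssKD D P) ∧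
      (HeightOnePrime D P ↔ IsTMax D K P) ∧ (HeightOnePrime D P ↔ IsWMax D K P) := by
  have htmax : ∀ P : Ideal D, HeightOnePrime D P → IsTMax D K P := by
    intro P hp
    refine ⟨hp.2.1, hp.1.ne_top, isTIdeal_of_heightOne hp, ?_⟩
    intro J hJt hJti hPJ
    have hJ0 : J ≠ ⊥ := fun h0 => hp.2.1 (le_bot_iff.mp (h0 ▸ hPJ))
    exact ((h P).mp hp).2.2.2.2 J hJt (isStarIdeal_of_isTIdeal s hJ0 hJti) hPJ
  have h1_of_tmax : ∀ P : Ideal D, IsTMax D K P → HeightOnePrime D P := by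
    intro P hP
    obtain ⟨hne, hnt, hti, hmax⟩ := hP
    obtain ⟨M, hM, hPM⟩ := exists_isMaxStarIdeal_ge s hne hnt
      (isStarIdeal_of_isTIdeal s hne hti)
    have hM1 : HeightOnePrime D M := (h M).mpr hM
    have hMP := hmax M hM1.1.ne_top (isTIdeal_of_heightOne hM1) hPM
    exact hMP ▸ hM1
  intro P
  refine ⟨⟨?_, ?_⟩, ⟨fun hp => htmax P hp, fun ht => h1_of_tmax P ht⟩, ⟨?_, ?_⟩⟩
  · -- height one → Ass
    intro hp
    obtain ⟨a, haP, ha0⟩ := Submodule.exists_mem_ne_zero_of_ne_bot hp.2.1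
    have hcol : (Ideal.span {a}).colon (Ideal.span {(1 : D)}) = Ideal.span {a} := by
      ext x
      rw [Ideal.mem_colon_span_singleton, mul_one]
    refine ⟨hp.1, a, 1, ha0, one_ne_zero, ?_, ?_⟩
    · rw [hcol]
      exact Ideal.span_le.mpr (Set.singleton_subset_iff.mpr haP)
    · intro Q hQ hle hQP
      rw [hcol] at hle
      have hQ0 : Q ≠ ⊥ := fun h0 =>
        ha0 ((Submodule.mem_bot D).mp (h0 ▸ hle (Ideal.subset_span rfl)))
      rcases eq_or_lt_of_le hQP with he | hlt
      · exact he
      · exact absurd (hp.2.2 Q hQ hlt) hQ0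
  · -- Ass → height one
    intro hass
    obtain ⟨hti, hne⟩ := inAss_isTIdeal (K := K) hass
    have hnt : P ≠ ⊤ := hass.1.ne_top
    obtain ⟨M, hM, hPM⟩ := exists_isMaxStarIdeal_ge s hne hnt
      (isStarIdeal_of_isTIdeal s hne hti)
    have hM1 : HeightOnePrime D M := (h M).mpr hM
    rcases eq_or_lt_of_le hPM with he | hlt
    · exact he ▸ hM1
    · exact absurd (hM1.2.2 P hass.1 hlt) hne
  · -- height one → w-max
    intro hp
    refine ⟨hp.2.1, hp.1.ne_top, isWIdeal_of_isTIdeal (isTIdeal_of_heightOne hp), ?_⟩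
    intro J hJt hJw hPJ
    have hJ0 : J ≠ ⊥ := fun h0 => hp.2.1 (le_bot_iff.mp (h0 ▸ hPJ))
    obtain ⟨T, hJT, hTt, hTti⟩ := exists_tIdeal_between hJ0 hJt hJw
    have hTP : T = P := (htmax P hp).2.2.2 T hTt hTti (hPJ.trans hJT)
    exact le_antisymm (hJT.trans hTP.le) hPJ
  · -- w-max → height one
    intro hw
    obtain ⟨hne, hnt, hwid, hmax⟩ := hw
    obtain ⟨T, hPT, hTt, hTti⟩ := exists_tIdeal_between hne hnt hwid
    have hT0 : T ≠ ⊥ := fun h0 => hne (le_bot_iff.mp (h0 ▸ hPT))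
    obtain ⟨M, hM, hTM⟩ := exists_isMaxStarIdeal_ge s hT0 hTt
      (isStarIdeal_of_isTIdeal s hT0 hTti)
    have hM1 : HeightOnePrime D M := (h M).mpr hM
    have hMP := hmax M hM1.1.ne_top (isWIdeal_of_isTIdeal (isTIdeal_of_heightOne hM1))
      (hPT.trans hTM)
    exact hMP ▸ hM1
end

section
/- Let D = F[X^2, X^3] = F + X^2 F[X] where F is a field of characteristic 2. Then D is an almost GCD-domain which is not integrally closed. -/
open FractionalIdeal

variable (D : Type*) (K : Type*) [CommRing D] [IsDomain D] [Field K] [Algebra D K]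
  [IsFractionRing D K]

variable {D : Type*} {K : Type*} [CommRing D] [IsDomain D] [Field K] [Algebra D K]
  [IsFractionRing D K]

open StarOperation


section AuxStmt18

open Polynomial

variable (F : Type*) [Field F]

theorem aux18_coeff_one_mul (p q : F[X]) :
    (p * q).coeff 1 = p.coeff 0 * q.coeff 1 + p.coeff 1 * q.coeff 0 := by
  rw [coeff_mul, Finset.Nat.sum_antidiagonal_eq_sum_range_succ_mk]
  simp [Finset.sum_range_succ]

theorem aux18_Xpow_mem (i : ℕ) :
    (X : F[X]) ^ (i + 2) ∈ Algebra.adjoin F ({X ^ 2, X ^ 3} : Set F[X]) := by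
  induction i using Nat.strong_induction_on with
  | _ i ih =>
    match i with
    | 0 => exact Algebra.subset_adjoin (Or.inl rfl)
    | 1 => exact Algebra.subset_adjoin (Or.inr rfl)
    | (j + 2) =>
      have h1 : (X : F[X]) ^ (j + 2 + 2) = X ^ 2 * X ^ (j + 2) := by ring
      rw [h1]
      exact mul_mem (Algebra.subset_adjoin (Or.inl rfl)) (ih j (by omega))

theorem aux18_mem_iff (p : F[X]) :
    p ∈ Algebra.adjoin F ({X ^ 2, X ^ 3} : Set F[X]) ↔ p.coeff 1 = 0 := by
  constructor
  · intro hp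
    let S : Subalgebra F F[X] :=
      { carrier := {q | q.coeff 1 = 0}
        mul_mem' := fun {a b} ha hb => by
          simp only [Set.mem_setOf_eq] at *
          rw [aux18_coeff_one_mul, ha, hb]; ring
        add_mem' := fun {a b} ha hb => by
          simp only [Set.mem_setOf_eq] at *
          rw [coeff_add, ha, hb, add_zero]
        algebraMap_mem' := fun r => by
          simp [Set.mem_setOf_eq, coeff_C] }
    have hS : Algebra.adjoin F ({X ^ 2, X ^ 3} : Set F[X]) ≤ S := by
      apply Algebra.adjoin_le
      rintro q (rfl | rfl) <;> exact coeff_X_pow _ 1 |>.trans (by norm_num)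
    exact hS hp
  · intro hp
    have hrep := p.as_sum_support_C_mul_X_pow
    rw [show p = ∑ i ∈ p.support, C (p.coeff i) * X ^ i from hrep]
    apply Subalgebra.sum_mem
    intro i hi
    match i with
    | 0 => simpa using Subalgebra.algebraMap_mem (Algebra.adjoin F ({X ^ 2, X ^ 3} : Set F[X])) (p.coeff 0)
    | 1 =>
      rw [hp]
      simpa using Subalgebra.zero_mem _
    | (j + 2) =>
      refine mul_mem ?_ (aux18_Xpow_mem F j)
      simpa using Subalgebra.algebraMap_mem
        (Algebra.adjoin F ({X ^ 2, X ^ 3} : Set F[X])) (p.coeff (j + 2))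

theorem aux18_sq_coeff_one [CharP F 2] (p : F[X]) : (p ^ 2).coeff 1 = 0 := by
  have h2 : (2 : F) = 0 := by
    have := CharP.cast_eq_zero F 2; simpa using this
  rw [sq, aux18_coeff_one_mul]
  have : p.coeff 0 * p.coeff 1 + p.coeff 1 * p.coeff 0 = 2 * (p.coeff 0 * p.coeff 1) := by ring
  rw [this, h2, zero_mul]

variable [CharP F 2] (DD : Subalgebra F F[X])
  (hDD : ∀ p : F[X], p ∈ DD ↔ p.coeff 1 = 0)

include hDD in
theorem aux18_agcd (K : Type) [Field K] [Algebra DD K] [IsFractionRing DD K] :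
    IsAGCDDomain DD K := by
  classical
  intro a b ha hb
  have hA0 : (a : F[X]) ≠ 0 := fun h => ha (Subtype.ext h)
  have hB0 : (b : F[X]) ≠ 0 := fun h => hb (Subtype.ext h)
  set g := EuclideanDomain.gcd (a : F[X]) (b : F[X]) with hgdef
  have hg0 : g ≠ 0 := fun h => hA0 (EuclideanDomain.gcd_eq_zero_iff.mp h).1
  obtain ⟨a', hAeq⟩ : g ∣ (a : F[X]) := EuclideanDomain.gcd_dvd_left _ _
  obtain ⟨b', hBeq⟩ : g ∣ (b : F[X]) := EuclideanDomain.gcd_dvd_right _ _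
  have ha'0 : a' ≠ 0 := by rintro rfl; rw [mul_zero] at hAeq; exact hA0 hAeq
  have hb'0 : b' ≠ 0 := by rintro rfl; rw [mul_zero] at hBeq; exact hB0 hBeq
  have hcop : IsCoprime a' b' := by
    refine ⟨EuclideanDomain.gcdA (a : F[X]) (b : F[X]),
      EuclideanDomain.gcdB (a : F[X]) (b : F[X]), ?_⟩
    have hbez := EuclideanDomain.gcd_eq_gcd_ab (a : F[X]) (b : F[X])
    apply mul_left_cancel₀ hg0
    rw [mul_one]
    calc g * (EuclideanDomain.gcdA (a : F[X]) (b : F[X]) * a' +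
          EuclideanDomain.gcdB (a : F[X]) (b : F[X]) * b')
        = (a : F[X]) * EuclideanDomain.gcdA (a : F[X]) (b : F[X]) +
          (b : F[X]) * EuclideanDomain.gcdB (a : F[X]) (b : F[X]) := by
          rw [hAeq, hBeq]; ring
      _ = g := hbez.symm
  set d : DD := ⟨g ^ 2, (hDD _).mpr (aux18_sq_coeff_one F g)⟩ with hddef
  set ea : DD := ⟨a' ^ 2, (hDD _).mpr (aux18_sq_coeff_one F a')⟩ with headef
  set eb : DD := ⟨b' ^ 2, (hDD _).mpr (aux18_sq_coeff_one F b')⟩ with hebdef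
  have hda : a ^ 2 = d * ea := by
    apply Subtype.ext
    show ((a : F[X])) ^ 2 = g ^ 2 * a' ^ 2
    rw [hAeq]; ring
  have hdb : b ^ 2 = d * eb := by
    apply Subtype.ext
    show ((b : F[X])) ^ 2 = g ^ 2 * b' ^ 2
    rw [hBeq]; ring
  have hd0 : d ≠ 0 := fun h => (pow_ne_zero 2 hg0) (congrArg Subtype.val h)
  have hea0 : ea ≠ 0 := fun h => (pow_ne_zero 2 ha'0) (congrArg Subtype.val h)
  refine ⟨2, by norm_num, d, ?_⟩
  set c : K := algebraMap DD K d with hcdef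
  have hc0 : c ≠ 0 := by
    rw [hcdef, Ne, IsFractionRing.to_map_eq_zero_iff]; exact hd0
  set I : Ideal DD := Ideal.span {a ^ 2, b ^ 2} with hIdef
  have hI0 : (I : FractionalIdeal (nonZeroDivisors DD) K) ≠ 0 := by
    rw [coeIdeal_ne_zero]
    intro h
    have hmem : a ^ 2 ∈ I := Ideal.subset_span (Or.inl rfl)
    rw [h] at hmem
    exact pow_ne_zero 2 ha (by simpa using hmem)
  have key : (I : FractionalIdeal (nonZeroDivisors DD) K)⁻¹ =
      spanSingleton (nonZeroDivisors DD) c⁻¹ := by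
    apply le_antisymm
    · intro x hx
      replace hx : x ∈ ((I : FractionalIdeal (nonZeroDivisors DD) K))⁻¹ := hx
      rw [mem_inv_iff hI0] at hx
      show x ∈ spanSingleton (nonZeroDivisors DD) c⁻¹
      have hxa := hx _ ((mem_coeIdeal _).mpr ⟨a ^ 2, Ideal.subset_span (Or.inl rfl), rfl⟩)
      have hxb := hx _ ((mem_coeIdeal _).mpr ⟨b ^ 2, Ideal.subset_span (Or.inr rfl), rfl⟩)
      rw [mem_one_iff] at hxa hxb
      obtain ⟨u, hu⟩ := hxa
      obtain ⟨v, hv⟩ := hxb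
      have huv : u * b ^ 2 = v * a ^ 2 := by
        apply IsFractionRing.injective DD K
        rw [_root_.map_mul, _root_.map_mul, hu, hv]; ring
      have huv' : (u : F[X]) * ((b : F[X])) ^ 2 = (v : F[X]) * ((a : F[X])) ^ 2 := by
        have := congrArg Subtype.val huv
        push_cast at this
        exact this
      have h2 : (u : F[X]) * b' ^ 2 = (v : F[X]) * a' ^ 2 := by
        apply mul_left_cancel₀ (pow_ne_zero 2 hg0)
        calc g ^ 2 * ((u : F[X]) * b' ^ 2) = (u : F[X]) * (g * b') ^ 2 := by ring
          _ = (u : F[X]) * ((b : F[X])) ^ 2 := by rw [← hBeq]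
          _ = (v : F[X]) * ((a : F[X])) ^ 2 := huv'
          _ = (v : F[X]) * (g * a') ^ 2 := by rw [hAeq]
          _ = g ^ 2 * ((v : F[X]) * a' ^ 2) := by ring
      have hdvd : a' ^ 2 ∣ (u : F[X]) := by
        apply (hcop.pow (n := 2) (m := 2)).dvd_of_dvd_mul_right
        exact ⟨(v : F[X]), by rw [h2]; ring⟩
      obtain ⟨p, hp⟩ := hdvd
      have hv' : (v : F[X]) = b' ^ 2 * p := by
        apply mul_left_cancel₀ (pow_ne_zero 2 ha'0)
        calc a' ^ 2 * (v : F[X]) = (v : F[X]) * a' ^ 2 := by ring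
          _ = (u : F[X]) * b' ^ 2 := h2.symm
          _ = a' ^ 2 * (b' ^ 2 * p) := by rw [hp]; ring
      have hu1 : (u : F[X]).coeff 1 = 0 := (hDD _).mp u.2
      have hv1 : (v : F[X]).coeff 1 = 0 := (hDD _).mp v.2
      have hpa : a'.coeff 0 ^ 2 * p.coeff 1 = 0 := by
        rw [hp, aux18_coeff_one_mul, aux18_sq_coeff_one, zero_mul, add_zero, sq,
          mul_coeff_zero] at hu1
        rw [← hu1]; ring
      have hpb : b'.coeff 0 ^ 2 * p.coeff 1 = 0 := by
        rw [hv', aux18_coeff_one_mul, aux18_sq_coeff_one, zero_mul, add_zero, sq,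
          mul_coeff_zero] at hv1
        rw [← hv1]; ring
      have hp1 : p.coeff 1 = 0 := by
        by_contra hne
        have ha00 : a'.coeff 0 = 0 := by
          have := (mul_eq_zero.mp hpa).resolve_right hne
          exact pow_eq_zero_iff (n := 2) (by norm_num) |>.mp this
        have hb00 : b'.coeff 0 = 0 := by
          have := (mul_eq_zero.mp hpb).resolve_right hne
          exact pow_eq_zero_iff (n := 2) (by norm_num) |>.mp this
        obtain ⟨s, t, hst⟩ := hcop
        have h00 := congrArg (fun q => Polynomial.coeff q 0) hst
        simp only [Polynomial.coeff_add, Polynomial.mul_coeff_zero, ha00, hb00, mul_zero,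
          add_zero, Polynomial.coeff_one_zero] at h00
        exact one_ne_zero h00.symm
      set w : DD := ⟨p, (hDD _).mpr hp1⟩ with hwdef
      have hwu : ea * w = u := by
        apply Subtype.ext
        show a' ^ 2 * p = (u : F[X])
        exact hp.symm
      have heaK : algebraMap DD K ea ≠ 0 := by
        rw [Ne, IsFractionRing.to_map_eq_zero_iff]; exact hea0
      have hxc : x * c = algebraMap DD K w := by
        apply mul_right_cancel₀ heaK
        calc x * c * algebraMap DD K ea = x * algebraMap DD K (d * ea) := by
              rw [_root_.map_mul, hcdef]; ring
          _ = x * algebraMap DD K (a ^ 2) := by rw [← hda]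
          _ = algebraMap DD K u := hu.symm
          _ = algebraMap DD K (ea * w) := by rw [hwu]
          _ = algebraMap DD K w * algebraMap DD K ea := by rw [_root_.map_mul]; ring
      rw [mem_spanSingleton]
      refine ⟨w, ?_⟩
      rw [Algebra.smul_def, ← hxc, mul_assoc, mul_inv_cancel₀ hc0, mul_one]
    · rw [spanSingleton_le_iff_mem, mem_inv_iff hI0]
      intro y hy
      rw [mem_coeIdeal] at hy
      obtain ⟨z, hzI, rfl⟩ := hy
      rw [mem_one_iff]
      rw [hIdef, Ideal.mem_span_pair] at hzI
      obtain ⟨u, v, huv⟩ := hzI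
      refine ⟨u * ea + v * eb, ?_⟩
      have hz : z = d * (u * ea + v * eb) := by
        rw [← huv, hda, hdb]; ring
      rw [hz, _root_.map_mul, ← hcdef, ← mul_assoc, inv_mul_cancel₀ hc0, one_mul]
  show vOp _ _ _ = _
  rw [vOp, key, spanSingleton_inv, inv_inv]

omit [CharP F 2] in
include hDD in
theorem aux18_not_ic : ¬ IsIntegrallyClosed DD := by
  intro hIC
  have hx2m : (X : F[X]) ^ 2 ∈ DD := (hDD _).mpr (by rw [coeff_X_pow]; norm_num)
  have hx3m : (X : F[X]) ^ 3 ∈ DD := (hDD _).mpr (by rw [coeff_X_pow]; norm_num)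
  set x2 : DD := ⟨X ^ 2, hx2m⟩ with hx2def
  set x3 : DD := ⟨X ^ 3, hx3m⟩ with hx3def
  have hx20 : x2 ≠ 0 := fun h =>
    (pow_ne_zero 2 (Polynomial.X_ne_zero (R := F))) (congrArg Subtype.val h)
  have hx2K : algebraMap DD (FractionRing DD) x2 ≠ 0 := by
    rw [Ne, IsFractionRing.to_map_eq_zero_iff]; exact hx20
  set ξ : FractionRing DD :=
    algebraMap DD (FractionRing DD) x3 / algebraMap DD (FractionRing DD) x2 with hxi
  have hsq : ξ ^ 2 = algebraMap DD (FractionRing DD) x2 := by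
    have h36 : x3 ^ 2 = x2 ^ 3 := by
      apply Subtype.ext
      show ((X : F[X]) ^ 3) ^ 2 = ((X : F[X]) ^ 2) ^ 3
      ring
    have hpow2 : algebraMap DD (FractionRing DD) (x2 ^ 2) ≠ 0 := by
      rw [Ne, IsFractionRing.to_map_eq_zero_iff]
      exact pow_ne_zero 2 hx20
    rw [hxi, div_pow, ← map_pow, ← map_pow, h36,
      show (x2 : ↥DD) ^ 3 = x2 * x2 ^ 2 from by ring, _root_.map_mul, mul_div_assoc,
      div_self hpow2, mul_one]
  have hint : IsIntegral DD ξ := by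
    refine ⟨Polynomial.X ^ 2 - Polynomial.C x2,
      Polynomial.monic_X_pow_sub_C _ (by norm_num), ?_⟩
    rw [Polynomial.eval₂_sub, Polynomial.eval₂_pow, Polynomial.eval₂_X, Polynomial.eval₂_C,
      hsq, sub_self]
  obtain ⟨y, hy⟩ := (isIntegrallyClosed_iff (FractionRing DD)).mp hIC hint
  have hyx : y * x2 = x3 := by
    apply IsFractionRing.injective DD (FractionRing DD)
    rw [_root_.map_mul, hy, hxi, div_mul_cancel₀ _ hx2K]
  have hval : (y : F[X]) * X ^ 2 = X ^ 3 := by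
    have := congrArg Subtype.val hyx
    push_cast at this
    exact this
  have hyX : (y : F[X]) = X := by
    apply mul_right_cancel₀ (pow_ne_zero 2 (Polynomial.X_ne_zero (R := F)))
    rw [hval]; ring
  have h1 := (hDD _).mp y.2
  rw [hyX, Polynomial.coeff_X_one] at h1
  exact one_ne_zero h1

end AuxStmt18

set_option synthInstance.maxHeartbeats 1000000 in
theorem stmt18 (F : Type*) [Field F] [CharP F 2] :
    (∀ (K : Type) [Field K]
        [Algebra (Algebra.adjoin F ({Polynomial.X ^ 2, Polynomial.X ^ 3} :
          Set (Polynomial F))) K]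
        [IsFractionRing (Algebra.adjoin F ({Polynomial.X ^ 2, Polynomial.X ^ 3} :
          Set (Polynomial F))) K],
        IsAGCDDomain (Algebra.adjoin F ({Polynomial.X ^ 2, Polynomial.X ^ 3} :
          Set (Polynomial F))) K) ∧
      ¬IsIntegrallyClosed (Algebra.adjoin F ({Polynomial.X ^ 2, Polynomial.X ^ 3} :
        Set (Polynomial F))) := by
  constructor
  · intro K _ _ _
    exact aux18_agcd F _ (aux18_mem_iff F) K
  · exact aux18_not_ic F _ (aux18_mem_iff F)
end
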